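/- arXiv:2405.17646 — 2 statements merged into one kernel-verified Lean document; each statement's English description precedes it below -/
import Mathlib

section
/- Let P be a finite poset with gap(P) = c(P) + |P| - (max(P) + min(P) + edges(P)) = 1. Then the set of elements of P having crossing number one forms a nonempty saturated chain, and all other elements of P have crossing number zero. -/
open Classical

variable {α : Type*}

/-- A saturated chain from `v` up to a maximal element: a list `v = v₀ ⋖ v₁ ⋖ … ⋖ vₖ`
with `vₖ` maximal. -/
def UpChain [PartialOrder α] (v : α) (l : List α) : Prop :=
  l.Chain' (· ⋖ ·) ∧ l.head? = some v ∧ ∃ m, l.getLast? = some m ∧ IsMax m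

/-- A saturated chain from a minimal element up to `v`. -/
def DownChain [PartialOrder α] (v : α) (l : List α) : Prop :=
  l.Chain' (· ⋖ ·) ∧ (∃ m, l.head? = some m ∧ IsMin m) ∧ l.getLast? = some v

/-- `uc v` : the number of saturated chains from `v` up to a maximal element. -/
noncomputable def uc [PartialOrder α] (v : α) : ℕ := Nat.card {l : List α // UpChain v l}

/-- `dc v` : the number of saturated chains from `v` down to a minimal element. -/
noncomputable def dc [PartialOrder α] (v : α) : ℕ := Nat.card {l : List α // DownChain v l}

/-- A maximal chain: a saturated chain from a minimal element to a maximal element. -/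
def IsMaxChainList [PartialOrder α] (l : List α) : Prop :=
  l.Chain' (· ⋖ ·) ∧ (∃ m, l.head? = some m ∧ IsMin m) ∧ ∃ m, l.getLast? = some m ∧ IsMax m

/-- `c(P)`: the number of maximal chains. -/
noncomputable def numMaxChains (α : Type*) [PartialOrder α] : ℕ :=
  Nat.card {l : List α // IsMaxChainList l}

/-- `max(P)`: the number of maximal elements. -/
noncomputable def numMax (α : Type*) [PartialOrder α] : ℕ := Nat.card {v : α // IsMax v}

/-- `min(P)`: the number of minimal elements. -/
noncomputable def numMin (α : Type*) [PartialOrder α] : ℕ := Nat.card {v : α // IsMin v}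

/-- `edges(P)`: the number of cover relations (edges of the Hasse diagram). -/
noncomputable def numEdges (α : Type*) [PartialOrder α] : ℕ :=
  Nat.card {p : α × α // p.1 ⋖ p.2}

/-- `gap(P) = c(P) + |P| - (max(P) + min(P) + edges(P))`. -/
noncomputable def gap (α : Type*) [PartialOrder α] : ℤ :=
  (numMaxChains α : ℤ) + Nat.card α - ((numMax α : ℤ) + numMin α + numEdges α)

/-- The crossing number `(uc(v)-1)(dc(v)-1)` of `v`. -/
noncomputable def crossingNumber [PartialOrder α] (v : α) : ℕ := (uc v - 1) * (dc v - 1)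

/-- `c` is the center of an X-shaped subposet: there are `a, b < c < d, e`
with `a ∥ b` and `d ∥ e`. -/
def IsXCenter [PartialOrder α] (c : α) : Prop :=
  ∃ a b d e : α, a < c ∧ b < c ∧ c < d ∧ c < e ∧
    ¬ a ≤ b ∧ ¬ b ≤ a ∧ ¬ d ≤ e ∧ ¬ e ≤ d

/-- `P` contains an X-shaped subposet. -/
def HasX (α : Type*) [PartialOrder α] : Prop := ∃ c : α, IsXCenter c


open Finset

section Found
variable [Fintype α] [PartialOrder α]

lemma covchain_nodup {l : List α} (h : l.Chain' (· ⋖ ·)) : l.Nodup := by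
  have h1 : l.Chain' (· < ·) := h.imp (fun a b h => h.1)
  exact ((List.isChain_iff_pairwise.mp h1).imp (fun h => ne_of_lt h))

lemma covchain_finite (P : List α → Prop) (hP : ∀ l, P l → l.Chain' (· ⋖ ·)) :
    Finite {l : List α // P l} := by
  have : {l : List α | P l} ⊆ {l | l.length ≤ Fintype.card α} := fun l hl =>
    (covchain_nodup (hP l hl)).length_le_card
  exact ((List.finite_length_le α (Fintype.card α)).subset this).to_subtype

instance finite_upchain (v : α) : Finite {l : List α // UpChain v l} :=
  covchain_finite _ (fun _ h => h.1)

omit [Fintype α] in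
lemma upchain_singleton {v : α} (h : IsMax v) : UpChain v [v] :=
  ⟨List.isChain_singleton v, rfl, v, rfl, h⟩

omit [Fintype α] in
lemma upchain_max_eq {v : α} (h : IsMax v) {l : List α} (hl : UpChain v l) : l = [v] := by
  obtain ⟨hc, hh, m, hlast, hm⟩ := hl
  cases l with
  | nil => simp at hh
  | cons a t =>
    simp only [List.head?_cons, Option.some.injEq] at hh; subst hh
    cases t with
    | nil => rfl
    | cons b t' =>
      have hcov : a ⋖ b := (List.isChain_cons_cons.mp hc).1
      exact absurd (h hcov.lt.le) hcov.lt.not_ge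

lemma uc_max {v : α} (h : IsMax v) : uc v = 1 := by
  rw [uc, Nat.card_eq_one_iff_unique]
  refine ⟨⟨?_⟩, ⟨⟨[v], upchain_singleton h⟩⟩⟩
  rintro ⟨l1, h1⟩ ⟨l2, h2⟩
  simp [upchain_max_eq h h1, upchain_max_eq h h2]

omit [Fintype α] in
lemma upchain_cons {v w : α} {l : List α} (hvw : v ⋖ w) (hl : UpChain w l) :
    UpChain v (v :: l) := by
  obtain ⟨hc, hh, m, hlast, hm⟩ := hl
  cases l with
  | nil => simp at hh
  | cons a t =>
    simp only [List.head?_cons, Option.some.injEq] at hh; subst hh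
    exact ⟨List.isChain_cons_cons.mpr ⟨hvw, hc⟩, rfl, m, by rwa [List.getLast?_cons_cons], hm⟩

lemma exists_upchain (v : α) : ∃ l, UpChain v l := by
  induction v using WellFoundedGT.induction with
  | _ v ih =>
    by_cases h : IsMax v
    · exact ⟨[v], upchain_singleton h⟩
    · obtain ⟨w, hw⟩ := exists_covBy_of_wellFoundedLT h
      obtain ⟨l, hl⟩ := ih w hw.lt
      exact ⟨v :: l, upchain_cons hw hl⟩

lemma uc_pos (v : α) : 1 ≤ uc v := by
  have : Nonempty {l : List α // UpChain v l} := by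
    obtain ⟨l, hl⟩ := exists_upchain v; exact ⟨⟨l, hl⟩⟩
  exact Nat.card_pos

omit [Fintype α] in
lemma upchain_cases {v : α} (hv : ¬ IsMax v) {l : List α} (hl : UpChain v l) :
    ∃ w t, v ⋖ w ∧ UpChain w t ∧ l = v :: t := by
  obtain ⟨hc, hh, m, hlast, hm⟩ := hl
  cases l with
  | nil => simp at hh
  | cons a t =>
    simp only [List.head?_cons, Option.some.injEq] at hh; subst hh
    cases t with
    | nil =>
      exfalso; simp only [List.getLast?_singleton, Option.some.injEq] at hlast
      exact hv (hlast ▸ hm)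
    | cons b t' =>
      obtain ⟨h1, h2⟩ := List.isChain_cons_cons.mp hc
      exact ⟨b, b :: t', h1, ⟨h2, rfl, m, by rwa [List.getLast?_cons_cons] at hlast, hm⟩, rfl⟩

lemma uc_rec {v : α} (hv : ¬ IsMax v) :
    uc v = ∑ w : {w : α // v ⋖ w}, uc w.1 := by
  have hb : Function.Bijective
      (fun p : Σ w : {w : α // v ⋖ w}, {l : List α // UpChain w.1 l} =>
        (⟨v :: p.2.1, upchain_cons p.1.2 p.2.2⟩ : {l : List α // UpChain v l})) := by
    constructor
    · rintro ⟨⟨w1, hw1⟩, ⟨l1, hl1⟩⟩ ⟨⟨w2, hw2⟩, ⟨l2, hl2⟩⟩ heq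
      simp only [Subtype.mk.injEq, List.cons.injEq, true_and] at heq
      subst heq
      have : w1 = w2 := by
        have e1 := hl1.2.1; have e2 := hl2.2.1
        rw [e1] at e2; exact (Option.some.injEq _ _ ▸ e2 : _)
      subst this; rfl
    · rintro ⟨l, hl⟩
      obtain ⟨w, t, hvw, ht, rfl⟩ := upchain_cases hv hl
      exact ⟨⟨⟨w, hvw⟩, ⟨t, ht⟩⟩, rfl⟩
  calc uc v = Nat.card (Σ w : {w : α // v ⋖ w}, {l : List α // UpChain w.1 l}) :=
        (Nat.card_eq_of_bijective _ hb).symm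
    _ = ∑ w : {w : α // v ⋖ w}, uc w.1 := by
        have : ∀ w : {w : α // v ⋖ w}, Fintype {l : List α // UpChain w.1 l} :=
          fun w => Fintype.ofFinite _
        simp [Nat.card_eq_fintype_card, Fintype.card_sigma, uc]


open OrderDual in
omit [Fintype α] in
lemma dc_eq_uc_dual (v : α) : dc v = uc (toDual v) := by
  apply Nat.card_congr
  have hid1 : (⇑(ofDual (α := α)) ∘ ⇑(toDual (α := α))) = id := rfl
  have hid2 : (⇑(toDual (α := α)) ∘ ⇑(ofDual (α := α))) = id := rfl
  refine ⟨fun l => ⟨l.1.reverse.map toDual, ?_⟩, fun l => ⟨(l.1.map ofDual).reverse, ?_⟩, ?_, ?_⟩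
  · obtain ⟨l, hc, hmin, hlast⟩ := l
    refine ⟨?_, ?_, ?_⟩
    · show List.IsChain _ _; rw [List.isChain_map, List.isChain_reverse]
      exact hc.imp (fun a b h => toDual_covBy_toDual_iff.mpr h)
    · rw [List.head?_map, List.head?_reverse, hlast]; rfl
    · obtain ⟨m, hm, hmin'⟩ := hmin
      exact ⟨toDual m, by rw [List.getLast?_map, List.getLast?_reverse, hm]; rfl, hmin'.toDual⟩
  · obtain ⟨l, hc, hh, m, hm, hmax⟩ := l
    refine ⟨?_, ⟨ofDual m, ?_, ?_⟩, ?_⟩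
    · show List.IsChain _ _; rw [List.isChain_reverse, List.isChain_map]
      exact hc.imp (fun a b h => ofDual_covBy_ofDual_iff.mpr h)
    · rw [List.head?_reverse, List.getLast?_map, hm]; rfl
    · exact hmax.ofDual
    · rw [List.getLast?_reverse, List.head?_map, hh]; rfl
  · rintro ⟨l, hl⟩
    simp [List.map_map, hid1]
  · rintro ⟨l, hl⟩
    simp [List.map_map, hid2]

lemma dc_min {v : α} (h : IsMin v) : dc v = 1 := by
  rw [dc_eq_uc_dual]; exact uc_max h.toDual

lemma dc_pos (v : α) : 1 ≤ dc v := by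
  rw [dc_eq_uc_dual]; exact uc_pos _

lemma dc_rec {w : α} (hw : ¬ IsMin w) :
    dc w = ∑ u : {u : α // u ⋖ w}, dc u.1 := by
  rw [dc_eq_uc_dual]
  rw [uc_rec (by simpa using hw : ¬ IsMax (OrderDual.toDual w))]
  refine Fintype.sum_equiv
    ⟨fun u => ⟨OrderDual.ofDual u.1, toDual_covBy_toDual_iff.mp u.2⟩,
    fun u => ⟨OrderDual.toDual u.1, toDual_covBy_toDual_iff.mpr u.2⟩,
    fun u => rfl, fun u => rfl⟩ _ _ ?_
  intro u
  rw [dc_eq_uc_dual]; rfl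

lemma uc_anti {v w : α} (h : v ⋖ w) : uc w ≤ uc v := by
  rw [uc_rec h.lt.not_isMax]
  exact Finset.single_le_sum (f := fun u : {u : α // v ⋖ u} => uc u.1)
    (fun i _ => Nat.zero_le _) (Finset.mem_univ ⟨w, h⟩)

lemma dc_mono {v w : α} (h : v ⋖ w) : dc v ≤ dc w := by
  rw [dc_rec h.lt.not_isMin]
  exact Finset.single_le_sum (f := fun u : {u : α // u ⋖ w} => dc u.1)
    (fun i _ => Nat.zero_le _) (Finset.mem_univ ⟨v, h⟩)

instance finite_maxchain : Finite {l : List α // IsMaxChainList l} :=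
  covchain_finite _ (fun _ h => h.1)

lemma numMaxChains_eq : numMaxChains α = ∑ v : {v : α // IsMin v}, uc v.1 := by
  have hb : Function.Bijective
      (fun p : Σ v : {v : α // IsMin v}, {l : List α // UpChain v.1 l} =>
        (⟨p.2.1, p.2.2.1, ⟨p.1.1, p.2.2.2.1, p.1.2⟩, p.2.2.2.2⟩ :
          {l : List α // IsMaxChainList l})) := by
    constructor
    · rintro ⟨⟨v1, hv1⟩, ⟨l1, hl1⟩⟩ ⟨⟨v2, hv2⟩, ⟨l2, hl2⟩⟩ heq
      have heq := congrArg Subtype.val heq; dsimp only at heq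
      subst heq
      have : v1 = v2 := by
        have e1 := hl1.2.1; have e2 := hl2.2.1
        rw [e1] at e2; exact Option.some_injective _ e2
      subst this; rfl
    · rintro ⟨l, hc, ⟨m, hm, hmin⟩, hmax⟩
      exact ⟨⟨⟨m, hmin⟩, ⟨l, hc, hm, hmax⟩⟩, rfl⟩
  calc numMaxChains α
      = Nat.card (Σ v : {v : α // IsMin v}, {l : List α // UpChain v.1 l}) :=
        (Nat.card_eq_of_bijective _ hb).symm
    _ = ∑ v : {v : α // IsMin v}, uc v.1 := by
        have : ∀ v : {v : α // IsMin v}, Fintype {l : List α // UpChain v.1 l} :=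
          fun v => Fintype.ofFinite _
        simp [Nat.card_eq_fintype_card, Fintype.card_sigma, uc]



-- Finset abbreviations
noncomputable def covF (u : α) : Finset α := univ.filter (fun w => u ⋖ w)
noncomputable def dcovF (w : α) : Finset α := univ.filter (fun u => u ⋖ w)
noncomputable def EF (α : Type*) [Fintype α] [PartialOrder α] : Finset (α × α) :=
  univ.filter (fun p => p.1 ⋖ p.2)
noncomputable def MxF (α : Type*) [Fintype α] [PartialOrder α] : Finset α :=
  univ.filter (fun v => IsMax v)
noncomputable def MnF (α : Type*) [Fintype α] [PartialOrder α] : Finset α :=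
  univ.filter (fun v => IsMin v)

lemma key1 (f : α × α → ℤ) : ∑ p ∈ EF α, f p = ∑ u : α, ∑ w ∈ covF u, f (u, w) := by
  rw [EF, Finset.sum_filter, Fintype.sum_prod_type]
  refine Finset.sum_congr rfl (fun u _ => ?_)
  rw [covF, Finset.sum_filter]

lemma key2 (f : α × α → ℤ) : ∑ p ∈ EF α, f p = ∑ w : α, ∑ u ∈ dcovF w, f (u, w) := by
  rw [EF, Finset.sum_filter, Fintype.sum_prod_type_right]
  refine Finset.sum_congr rfl (fun w _ => ?_)
  rw [dcovF, Finset.sum_filter]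

lemma numEdges_eq : numEdges α = (EF α).card := by
  rw [numEdges, Nat.card_eq_fintype_card, Fintype.card_subtype, EF]

lemma numMax_eq : numMax α = (MxF α).card := by
  rw [numMax, Nat.card_eq_fintype_card, Fintype.card_subtype, MxF]

lemma numMin_eq : numMin α = (MnF α).card := by
  rw [numMin, Nat.card_eq_fintype_card, Fintype.card_subtype, MnF]

lemma numMaxChains_eq' : numMaxChains α = ∑ v ∈ MnF α, uc v := by
  rw [numMaxChains_eq]
  exact (Finset.sum_subtype (MnF α) (fun x => by simp [MnF]) (fun v => uc v)).symm

lemma uc_rec' {u : α} (hu : ¬ IsMax u) : uc u = ∑ w ∈ covF u, uc w := by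
  rw [uc_rec hu]
  exact (Finset.sum_subtype (covF u) (fun x => by simp [covF]) (fun w => uc w)).symm

lemma dc_rec' {w : α} (hw : ¬ IsMin w) : dc w = ∑ u ∈ dcovF w, dc u := by
  rw [dc_rec hw]
  exact (Finset.sum_subtype (dcovF w) (fun x => by simp [dcovF]) (fun u => dc u)).symm


lemma covF_empty {u : α} (h : IsMax u) : covF u = ∅ := by
  rw [covF, Finset.filter_eq_empty_iff]
  exact fun w _ hc => h.not_lt hc.lt

lemma dcovF_empty {w : α} (h : IsMin w) : dcovF w = ∅ := by
  rw [dcovF, Finset.filter_eq_empty_iff]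
  exact fun u _ hc => h.not_lt hc.lt

lemma e1 : ∑ p ∈ EF α, (uc p.2 : ℤ) * (dc p.1 : ℤ)
    = ∑ v : α, (uc v : ℤ) * (dc v : ℤ) - ∑ v ∈ MnF α, (uc v : ℤ) * (dc v : ℤ) := by
  rw [key2 (fun p => (uc p.2 : ℤ) * (dc p.1 : ℤ))]
  have hper : ∀ w : α, ∑ u ∈ dcovF w, (uc w : ℤ) * (dc u : ℤ)
      = (uc w : ℤ) * (dc w : ℤ) - (if IsMin w then (uc w : ℤ) * (dc w : ℤ) else 0) := by
    intro w
    by_cases hw : IsMin w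
    · simp [dcovF_empty hw, hw]
    · rw [← Finset.mul_sum, if_neg hw, sub_zero]
      congr 1
      rw [dc_rec' hw]
      push_cast
      rfl
  rw [Finset.sum_congr rfl (fun w _ => hper w), Finset.sum_sub_distrib]
  congr 1
  rw [MnF, ← Finset.sum_filter]

lemma e2 : ∑ p ∈ EF α, (uc p.2 : ℤ)
    = ∑ v : α, (uc v : ℤ) - ((MxF α).card : ℤ) := by
  rw [key1 (fun p => (uc p.2 : ℤ))]
  have hper : ∀ u : α, ∑ w ∈ covF u, (uc w : ℤ)
      = (uc u : ℤ) - (if IsMax u then (1:ℤ) else 0) := by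
    intro u
    by_cases hu : IsMax u
    · simp [covF_empty hu, hu, uc_max hu]
    · rw [if_neg hu, sub_zero, uc_rec' hu]
      push_cast
      rfl
  rw [Finset.sum_congr rfl (fun u _ => hper u), Finset.sum_sub_distrib]
  congr 1
  rw [MxF, ← Finset.sum_filter, Finset.sum_const, nsmul_eq_mul, mul_one]

lemma e3 : ∑ p ∈ EF α, (dc p.1 : ℤ)
    = ∑ v : α, (dc v : ℤ) - ((MnF α).card : ℤ) := by
  rw [key2 (fun p => (dc p.1 : ℤ))]
  have hper : ∀ w : α, ∑ u ∈ dcovF w, (dc u : ℤ)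
      = (dc w : ℤ) - (if IsMin w then (1:ℤ) else 0) := by
    intro w
    by_cases hw : IsMin w
    · simp [dcovF_empty hw, hw, dc_min hw]
    · rw [if_neg hw, sub_zero, dc_rec' hw]
      push_cast
      rfl
  rw [Finset.sum_congr rfl (fun w _ => hper w), Finset.sum_sub_distrib]
  congr 1
  rw [MnF, ← Finset.sum_filter, Finset.sum_const, nsmul_eq_mul, mul_one]

lemma gap_eq : gap α = (∑ v : α, ((uc v : ℤ) - 1) * ((dc v : ℤ) - 1))
    - ∑ p ∈ EF α, ((uc p.2 : ℤ) - 1) * ((dc p.1 : ℤ) - 1) := by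
  have hA : ∑ v : α, ((uc v : ℤ) - 1) * ((dc v : ℤ) - 1)
      = ∑ v : α, (uc v : ℤ) * (dc v : ℤ) - ∑ v : α, (uc v : ℤ)
        - ∑ v : α, (dc v : ℤ) + (Fintype.card α : ℤ) := by
    calc ∑ v : α, ((uc v : ℤ) - 1) * ((dc v : ℤ) - 1)
        = ∑ v : α, ((uc v : ℤ) * (dc v : ℤ) - (uc v : ℤ) - (dc v : ℤ) + 1) :=
          Finset.sum_congr rfl (fun v _ => by ring)
      _ = _ := by
          rw [Finset.sum_add_distrib, Finset.sum_sub_distrib, Finset.sum_sub_distrib,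
            Finset.sum_const, Finset.card_univ, nsmul_eq_mul, mul_one]
  have hB : ∑ p ∈ EF α, ((uc p.2 : ℤ) - 1) * ((dc p.1 : ℤ) - 1)
      = ∑ p ∈ EF α, (uc p.2 : ℤ) * (dc p.1 : ℤ) - ∑ p ∈ EF α, (uc p.2 : ℤ)
        - ∑ p ∈ EF α, (dc p.1 : ℤ) + ((EF α).card : ℤ) := by
    calc ∑ p ∈ EF α, ((uc p.2 : ℤ) - 1) * ((dc p.1 : ℤ) - 1)
        = ∑ p ∈ EF α, ((uc p.2 : ℤ) * (dc p.1 : ℤ) - (uc p.2 : ℤ) - (dc p.1 : ℤ) + 1) :=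
          Finset.sum_congr rfl (fun p _ => by ring)
      _ = _ := by
          rw [Finset.sum_add_distrib, Finset.sum_sub_distrib, Finset.sum_sub_distrib,
            Finset.sum_const, nsmul_eq_mul, mul_one]
  have hmn : ∑ v ∈ MnF α, (uc v : ℤ) * (dc v : ℤ) = ∑ v ∈ MnF α, (uc v : ℤ) := by
    refine Finset.sum_congr rfl (fun v hv => ?_)
    rw [dc_min (by simpa [MnF] using hv), Nat.cast_one, mul_one]
  rw [hA, hB, e1, e2, e3, hmn, gap, numMaxChains_eq', numMax_eq, numMin_eq, numEdges_eq,
    Nat.card_eq_fintype_card]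
  push_cast
  ring

noncomputable def kk (u : α) : ℕ := (covF u).card
noncomputable def jj (w : α) : ℕ := (dcovF w).card
noncomputable def tu (u : α) : ℤ :=
  if IsMax u then 0 else ((dc u : ℤ) - 1) * ((kk u : ℤ) - 1)
noncomputable def tw (w : α) : ℤ :=
  if IsMin w then 0 else ((uc w : ℤ) - 1) * ((jj w : ℤ) - 1)

lemma not_isMax_of_mem {u : α} (h : 2 ≤ uc u) : ¬ IsMax u :=
  fun hm => by simp [uc_max hm] at h

lemma not_isMin_of_mem {u : α} (h : 2 ≤ dc u) : ¬ IsMin u :=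
  fun hm => by simp [dc_min hm] at h

lemma kk_pos {u : α} (hu : ¬ IsMax u) : 1 ≤ kk u := by
  obtain ⟨w, hw⟩ := exists_covBy_of_wellFoundedLT hu
  exact Finset.card_pos.mpr ⟨w, by simp [covF, hw]⟩

lemma jj_pos {w : α} (hw : ¬ IsMin w) : 1 ≤ jj w := by
  obtain ⟨u, hu⟩ := exists_covBy_of_wellFoundedGT hw
  exact Finset.card_pos.mpr ⟨u, by simp [dcovF, hu]⟩

lemma kk_le_uc {u : α} (hu : ¬ IsMax u) : kk u ≤ uc u := by
  rw [uc_rec' hu, kk]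
  calc (covF u).card = ∑ w ∈ covF u, 1 := by rw [Finset.sum_const, smul_eq_mul, mul_one]
    _ ≤ ∑ w ∈ covF u, uc w := Finset.sum_le_sum (fun w _ => uc_pos w)

lemma jj_le_dc {w : α} (hw : ¬ IsMin w) : jj w ≤ dc w := by
  rw [dc_rec' hw, jj]
  calc (dcovF w).card = ∑ u ∈ dcovF w, 1 := by rw [Finset.sum_const, smul_eq_mul, mul_one]
    _ ≤ ∑ u ∈ dcovF w, dc u := Finset.sum_le_sum (fun u _ => dc_pos u)

lemma tu_nonneg (u : α) : 0 ≤ tu u := by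
  rw [tu]
  by_cases hu : IsMax u
  · simp [hu]
  · rw [if_neg hu]
    have h1 : (1 : ℤ) ≤ dc u := by exact_mod_cast dc_pos u
    have h2 : (1 : ℤ) ≤ kk u := by exact_mod_cast kk_pos hu
    nlinarith

lemma tw_nonneg (w : α) : 0 ≤ tw w := by
  rw [tw]
  by_cases hw : IsMin w
  · simp [hw]
  · rw [if_neg hw]
    have h1 : (1 : ℤ) ≤ uc w := by exact_mod_cast uc_pos w
    have h2 : (1 : ℤ) ≤ jj w := by exact_mod_cast jj_pos hw
    nlinarith

lemma gap_eq_up : gap α = ∑ u : α, tu u := by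
  rw [gap_eq, key1 (fun p => ((uc p.2 : ℤ) - 1) * ((dc p.1 : ℤ) - 1)),
    ← Finset.sum_sub_distrib]
  refine Finset.sum_congr rfl (fun u _ => ?_)
  by_cases hu : IsMax u
  · rw [tu, if_pos hu, covF_empty hu, Finset.sum_empty, sub_zero, uc_max hu]
    simp
  · rw [tu, if_neg hu]
    have hsum : ∑ w ∈ covF u, ((uc w : ℤ) - 1) * ((dc u : ℤ) - 1)
        = ((uc u : ℤ) - (kk u : ℤ)) * ((dc u : ℤ) - 1) := by
      rw [← Finset.sum_mul]
      congr 1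
      rw [Finset.sum_sub_distrib, Finset.sum_const, nsmul_eq_mul, mul_one, kk]
      congr 1
      rw [uc_rec' hu]
      push_cast
      rfl
    rw [hsum]
    ring

lemma gap_eq_down : gap α = ∑ w : α, tw w := by
  rw [gap_eq, key2 (fun p => ((uc p.2 : ℤ) - 1) * ((dc p.1 : ℤ) - 1)),
    ← Finset.sum_sub_distrib]
  refine Finset.sum_congr rfl (fun w _ => ?_)
  by_cases hw : IsMin w
  · rw [tw, if_pos hw, dcovF_empty hw, Finset.sum_empty, sub_zero, dc_min hw]
    simp
  · rw [tw, if_neg hw]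
    have hsum : ∑ u ∈ dcovF w, ((uc w : ℤ) - 1) * ((dc u : ℤ) - 1)
        = ((uc w : ℤ) - 1) * ((dc w : ℤ) - (jj w : ℤ)) := by
      rw [← Finset.mul_sum]
      congr 1
      rw [Finset.sum_sub_distrib, Finset.sum_const, nsmul_eq_mul, mul_one, jj]
      congr 1
      rw [dc_rec' hw]
      push_cast
      rfl
    rw [hsum]
    ring

omit [Fintype α] [PartialOrder α] in
lemma sum_one_structure [Fintype α] (f : α → ℤ) (h0 : ∀ u, 0 ≤ f u)
    (h1 : ∑ u : α, f u = 1) : ∃ u, f u = 1 ∧ ∀ v, v ≠ u → f v = 0 := by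
  have hex : ∃ u, f u ≠ 0 := by
    by_contra h
    push_neg at h
    rw [Finset.sum_congr rfl (fun u _ => h u), Finset.sum_const] at h1
    simp at h1
  obtain ⟨u, hu⟩ := hex
  have hrest : ∑ v ∈ univ.erase u, f v = 1 - f u := by
    have := Finset.sum_erase_add univ f (Finset.mem_univ u)
    omega
  have hrest0 : 0 ≤ ∑ v ∈ univ.erase u, f v :=
    Finset.sum_nonneg (fun v _ => h0 v)
  have h4 := h0 u
  have hfu : f u = 1 := by omega
  refine ⟨u, hfu, fun v hv => ?_⟩
  have hz : ∑ v ∈ univ.erase u, f v = 0 := by omega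
  have := (Finset.sum_eq_zero_iff_of_nonneg (fun v _ => h0 v)).mp hz
  exact this v (Finset.mem_erase.mpr ⟨hv, Finset.mem_univ v⟩)

omit [Fintype α] [PartialOrder α] in
lemma all_one_of_sum_card [DecidableEq α] {s : Finset α} {f : α → ℕ}
    (h1 : ∀ i ∈ s, 1 ≤ f i) (hs : ∑ i ∈ s, f i = s.card) : ∀ i ∈ s, f i = 1 := by
  by_contra h
  push_neg at h
  obtain ⟨i, hi, hfi⟩ := h
  have h2 : 2 ≤ f i := by
    have := h1 i hi; omega
  have : s.card + 1 ≤ ∑ j ∈ s, f j := by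
    calc s.card + 1 = (∑ j ∈ s.erase i, 1) + 2 := by
          rw [Finset.sum_const, smul_eq_mul, mul_one, Finset.card_erase_of_mem hi]
          have : 1 ≤ s.card := Finset.card_pos.mpr ⟨i, hi⟩
          omega
      _ ≤ (∑ j ∈ s.erase i, f j) + f i := by
          gcongr with j hj
          exact h1 j (Finset.mem_of_mem_erase hj)
      _ = ∑ j ∈ s, f j := Finset.sum_erase_add s f hi
  omega

lemma exists_top (hgap : gap α = 1) :
    ∃ u₀ : α, dc u₀ = 2 ∧ kk u₀ = 2 ∧ 2 ≤ uc u₀ ∧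
      (∀ v : α, 2 ≤ uc v → 2 ≤ dc v → v ≠ u₀ → kk v = 1) := by
  obtain ⟨u₀, h1, h2⟩ := sum_one_structure tu tu_nonneg (by rw [← gap_eq_up (α := α)]; exact hgap)
  have hnmax : ¬ IsMax u₀ := by
    intro h; rw [tu, if_pos h] at h1; norm_num at h1
  rw [tu, if_neg hnmax] at h1
  have hd0 : (0:ℤ) ≤ (dc u₀ : ℤ) - 1 := by
    have := dc_pos u₀; push_cast; omega
  have hfac : (dc u₀ : ℤ) - 1 = 1 ∧ (kk u₀ : ℤ) - 1 = 1 := by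
    rcases Int.mul_eq_one_iff_eq_one_or_neg_one.mp h1 with ⟨ha, hb⟩ | ⟨ha, hb⟩ <;> omega
  have hdc : dc u₀ = 2 := by exact_mod_cast (by omega : ((dc u₀ : ℤ)) = 2)
  have hkk : kk u₀ = 2 := by
    have := hfac.2
    exact_mod_cast (by omega : ((kk u₀ : ℤ)) = 2)
  refine ⟨u₀, hdc, hkk, le_trans (by omega) (kk_le_uc hnmax), fun v huv hdv hne => ?_⟩
  have h3 := h2 v hne
  have hnmaxv : ¬ IsMax v := not_isMax_of_mem huv
  rw [tu, if_neg hnmaxv, mul_eq_zero] at h3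
  have hk1 : 1 ≤ kk v := kk_pos hnmaxv
  rcases h3 with h3 | h3
  · exfalso
    have : (dc v : ℤ) = 1 := by omega
    have : dc v = 1 := by exact_mod_cast this
    omega
  · have : (kk v : ℤ) = 1 := by omega
    exact_mod_cast this

lemma exists_bot (hgap : gap α = 1) :
    ∃ w₀ : α, uc w₀ = 2 ∧ jj w₀ = 2 ∧ 2 ≤ dc w₀ ∧
      (∀ v : α, 2 ≤ uc v → 2 ≤ dc v → v ≠ w₀ → jj v = 1) := by
  obtain ⟨w₀, h1, h2⟩ := sum_one_structure tw tw_nonneg (by rw [← gap_eq_down (α := α)]; exact hgap)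
  have hnmin : ¬ IsMin w₀ := by
    intro h; rw [tw, if_pos h] at h1; norm_num at h1
  rw [tw, if_neg hnmin] at h1
  have hd0 : (0:ℤ) ≤ (uc w₀ : ℤ) - 1 := by
    have := uc_pos w₀; push_cast; omega
  have hfac : (uc w₀ : ℤ) - 1 = 1 ∧ (jj w₀ : ℤ) - 1 = 1 := by
    rcases Int.mul_eq_one_iff_eq_one_or_neg_one.mp h1 with ⟨ha, hb⟩ | ⟨ha, hb⟩ <;> omega
  have huc : uc w₀ = 2 := by exact_mod_cast (by omega : ((uc w₀ : ℤ)) = 2)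
  have hjj : jj w₀ = 2 := by
    have := hfac.2
    exact_mod_cast (by omega : ((jj w₀ : ℤ)) = 2)
  refine ⟨w₀, huc, hjj, le_trans (by omega) (jj_le_dc hnmin), fun v huv hdv hne => ?_⟩
  have h3 := h2 v hne
  have hnminv : ¬ IsMin v := not_isMin_of_mem hdv
  rw [tw, if_neg hnminv, mul_eq_zero] at h3
  have hj1 : 1 ≤ jj v := jj_pos hnminv
  rcases h3 with h3 | h3
  · exfalso
    have : (uc v : ℤ) = 1 := by omega
    have : uc v = 1 := by exact_mod_cast this
    omega
  · have : (jj v : ℤ) = 1 := by omega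
    exact_mod_cast this

lemma covF_singleton {v : α} (h : kk v = 1) :
    ∃ w, v ⋖ w ∧ (∀ x, v ⋖ x → x = w) ∧ uc v = uc w := by
  obtain ⟨w, hw⟩ := Finset.card_eq_one.mp h
  have hmem : ∀ x : α, v ⋖ x ↔ x ∈ covF v := by
    intro x; simp [covF]
  have hvw : v ⋖ w := (hmem w).mpr (by rw [hw]; exact Finset.mem_singleton_self w)
  refine ⟨w, hvw, fun x hx => by
    have := (hmem x).mp hx; rw [hw] at this; exact Finset.mem_singleton.mp this, ?_⟩
  rw [uc_rec' (not_isMax_of_lt hvw.lt), hw, Finset.sum_singleton]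

lemma dcovF_singleton {v : α} (h : jj v = 1) :
    ∃ u, u ⋖ v ∧ (∀ x, x ⋖ v → x = u) ∧ dc v = dc u := by
  obtain ⟨u, hu⟩ := Finset.card_eq_one.mp h
  have hmem : ∀ x : α, x ⋖ v ↔ x ∈ dcovF v := by
    intro x; simp [dcovF]
  have huv : u ⋖ v := (hmem u).mpr (by rw [hu]; exact Finset.mem_singleton_self u)
  refine ⟨u, huv, fun x hx => by
    have := (hmem x).mp hx; rw [hu] at this; exact Finset.mem_singleton.mp this, ?_⟩
  rw [dc_rec' (not_isMin_of_lt huv.lt), hu, Finset.sum_singleton]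

end Found


theorem gap_one_crossing_structure (α : Type*) [Fintype α] [PartialOrder α]
    (hgap : gap α = 1) :
    ∃ l : List α, l ≠ [] ∧ l.Chain' (· ⋖ ·) ∧
      (∀ v ∈ l, crossingNumber v = 1) ∧ (∀ v : α, v ∉ l → crossingNumber v = 0) := by
  classical
  obtain ⟨u₀, hdu₀, hku₀, huu₀, htop⟩ := exists_top hgap
  obtain ⟨w₀, huw₀, hjw₀, hdw₀, hbot⟩ := exists_bot hgap
  have step_up : ∀ v : α, 2 ≤ uc v → 2 ≤ dc v → v ≠ u₀ →
      ∃ w, v ⋖ w ∧ (∀ x, v ⋖ x → x = w) ∧ uc w = uc v ∧ 2 ≤ uc w ∧ 2 ≤ dc w := by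
    intro v h1 h2 hne
    obtain ⟨w, hvw, huniq, huc⟩ := covF_singleton (htop v h1 h2 hne)
    exact ⟨w, hvw, huniq, huc.symm, huc ▸ h1, le_trans h2 (dc_mono hvw)⟩
  have step_down : ∀ v : α, 2 ≤ uc v → 2 ≤ dc v → v ≠ w₀ →
      ∃ u, u ⋖ v ∧ (∀ x, x ⋖ v → x = u) ∧ dc u = dc v ∧ 2 ≤ uc u ∧ 2 ≤ dc u := by
    intro v h1 h2 hne
    obtain ⟨u, huv, huniq, hdc⟩ := dcovF_singleton (hbot v h1 h2 hne)
    exact ⟨u, huv, huniq, hdc.symm, le_trans h1 (uc_anti huv), hdc ▸ h2⟩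
  have le_top : ∀ v : α, 2 ≤ uc v → 2 ≤ dc v → v ≤ u₀ := by
    intro v
    induction v using WellFoundedGT.induction with
    | _ v ih =>
      intro h1 h2
      by_cases hne : v = u₀
      · exact hne.le
      · obtain ⟨w, hvw, _, _, hw1, hw2⟩ := step_up v h1 h2 hne
        exact le_trans hvw.lt.le (ih w hvw.lt hw1 hw2)
  have ge_bot : ∀ v : α, 2 ≤ uc v → 2 ≤ dc v → w₀ ≤ v := by
    intro v
    induction v using WellFoundedLT.induction with
    | _ v ih =>
      intro h1 h2
      by_cases hne : v = w₀
      · exact hne.ge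
      · obtain ⟨u, huv, _, _, hu1, hu2⟩ := step_down v h1 h2 hne
        exact le_trans (ih u huv.lt hu1 hu2) huv.lt.le
  have cover_top : ∀ x, u₀ ⋖ x → uc x = 1 := by
    intro x hx
    by_contra h
    have h1 : 2 ≤ uc x := by have := uc_pos x; omega
    have h2 : 2 ≤ dc x := le_trans (le_of_eq hdu₀.symm) (dc_mono hx)
    exact absurd (le_top x h1 h2) hx.lt.not_ge
  have cover_bot : ∀ x, x ⋖ w₀ → dc x = 1 := by
    intro x hx
    by_contra h
    have h2 : 2 ≤ dc x := by have := dc_pos x; omega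
    have h1 : 2 ≤ uc x := le_trans (le_of_eq huw₀.symm) (uc_anti hx)
    exact absurd (ge_bot x h1 h2) hx.lt.not_ge
  have hnmaxu₀ : ¬ IsMax u₀ := by
    intro h
    rw [kk, covF_empty h] at hku₀; simp at hku₀
  have hnminw₀ : ¬ IsMin w₀ := by
    intro h
    rw [jj, dcovF_empty h] at hjw₀; simp at hjw₀
  have uc_u₀ : uc u₀ = 2 := by
    rw [uc_rec' hnmaxu₀,
      Finset.sum_congr rfl (fun w hw => cover_top w (by simpa [covF] using hw)),
      Finset.sum_const, smul_eq_mul, mul_one, ← kk, hku₀]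
  have dc_w₀ : dc w₀ = 2 := by
    rw [dc_rec' hnminw₀,
      Finset.sum_congr rfl (fun u hu => cover_bot u (by simpa [dcovF] using hu)),
      Finset.sum_const, smul_eq_mul, mul_one, ← jj, hjw₀]
  have ucS : ∀ v : α, 2 ≤ uc v → 2 ≤ dc v → uc v = 2 := by
    intro v
    induction v using WellFoundedGT.induction with
    | _ v ih =>
      intro h1 h2
      by_cases hne : v = u₀
      · exact hne ▸ uc_u₀
      · obtain ⟨w, hvw, _, hucw, hw1, hw2⟩ := step_up v h1 h2 hne
        rw [← hucw]; exact ih w hvw.lt hw1 hw2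
  have dcS : ∀ v : α, 2 ≤ uc v → 2 ≤ dc v → dc v = 2 := by
    intro v
    induction v using WellFoundedLT.induction with
    | _ v ih =>
      intro h1 h2
      by_cases hne : v = w₀
      · exact hne ▸ dc_w₀
      · obtain ⟨u, huv, _, hdcu, hu1, hu2⟩ := step_down v h1 h2 hne
        rw [← hdcu]; exact ih u huv.lt hu1 hu2
  have build : ∀ v : α, 2 ≤ uc v → 2 ≤ dc v →
      ∃ l : List α, l.Chain' (· ⋖ ·) ∧ l.head? = some v ∧
        (∀ x ∈ l, 2 ≤ uc x ∧ 2 ≤ dc x) ∧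
        (∀ x ∈ l, x ≠ u₀ → ∀ y, x ⋖ y → y ∈ l) := by
    intro v
    induction v using WellFoundedGT.induction with
    | _ v ih =>
      intro h1 h2
      by_cases hne : v = u₀
      · refine ⟨[v], List.isChain_singleton v, rfl, ?_, ?_⟩
        · intro x hx
          rw [List.mem_singleton] at hx; subst hx; exact ⟨h1, h2⟩
        · intro x hx hxne
          rw [List.mem_singleton] at hx; subst hx
          exact absurd hne hxne
      · obtain ⟨w, hvw, huniq, hucw, hw1, hw2⟩ := step_up v h1 h2 hne
        obtain ⟨l', hc', hh', hS', hcl'⟩ := ih w hvw.lt hw1 hw2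
        refine ⟨v :: l', ?_, rfl, ?_, ?_⟩
        · show List.IsChain _ _; rw [List.isChain_cons]
          refine ⟨fun y hy => ?_, hc'⟩
          rw [hh'] at hy
          simp only [Option.mem_def, Option.some.injEq] at hy
          subst hy; exact hvw
        · intro x hx
          rcases List.mem_cons.mp hx with rfl | hx
          · exact ⟨h1, h2⟩
          · exact hS' x hx
        · intro x hx hxne y hxy
          rcases List.mem_cons.mp hx with rfl | hx
          · have hyw : y = w := huniq y hxy
            subst hyw
            exact List.mem_cons_of_mem _ (List.mem_of_mem_head? (by rw [hh']; rfl))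
          · exact List.mem_cons_of_mem _ (hcl' x hx hxne y hxy)
  obtain ⟨L, hLc, hLh, hLS, hLcl⟩ := build w₀ (le_of_eq huw₀.symm) hdw₀
  have memL : ∀ v : α, 2 ≤ uc v → 2 ≤ dc v → v ∈ L := by
    intro v
    induction v using WellFoundedLT.induction with
    | _ v ih =>
      intro h1 h2
      by_cases hne : v = w₀
      · subst hne; exact List.mem_of_mem_head? (by rw [hLh]; rfl)
      · obtain ⟨u, huv, _, _, hu1, hu2⟩ := step_down v h1 h2 hne
        have huL : u ∈ L := ih u huv.lt hu1 hu2
        have hune : u ≠ u₀ := by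
          intro h; subst h
          have := cover_top v huv
          omega
        exact hLcl u huL hune v huv
  refine ⟨L, ?_, hLc, ?_, ?_⟩
  · intro h; rw [h] at hLh; simp at hLh
  · intro v hv
    obtain ⟨h1, h2⟩ := hLS v hv
    rw [crossingNumber, ucS v h1 h2, dcS v h1 h2]
  · intro v hv
    by_cases h1 : 2 ≤ uc v
    · by_cases h2 : 2 ≤ dc v
      · exact absurd (memL v h1 h2) hv
      · have hd : dc v = 1 := by have := dc_pos v; omega
        rw [crossingNumber, hd]; simp
    · have hu : uc v = 1 := by have := uc_pos v; omega
      rw [crossingNumber, hu]; simp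
end

section
/- Let P be a finite poset and α a minimal, non-maximal element such that every element β covering α that covers at least two elements of P satisfies uc(β) = 1. Then gap(P) = gap(P \ α), where gap(Q) = c(Q) + |Q| - (max(Q) + min(Q) + edges(Q)). -/
open Classical

variable {α : Type*}

section GapHelpers
variable {γ : Type*} [PartialOrder γ]

lemma finite_chainList [Finite γ] : {l : List γ | l.Chain' (· ⋖ ·)}.Finite := by
  classical
  have := Fintype.ofFinite γ
  apply (List.finite_length_le γ (Fintype.card γ)).subset
  intro l hl
  have hlt : l.Chain' (· < ·) := hl.imp fun _ _ h => h.lt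
  have hp : l.Pairwise (· < ·) := (List.isChain_iff_pairwise).mp hlt
  exact List.Nodup.length_le_card (hp.imp ne_of_lt)

lemma finite_pred_chain [Finite γ] (p : List γ → Prop)
    (hp : ∀ l, p l → l.Chain' (· ⋖ ·)) : Finite {l : List γ // p l} :=
  (finite_chainList.subset hp).to_subtype

lemma chain_head_le {v : γ} {l : List γ} (hc : l.Chain' (· ⋖ ·)) (hh : l.head? = some v) :
    ∀ x ∈ l, v ≤ x := by
  obtain ⟨t, rfl⟩ : ∃ t, l = v :: t := by
    cases l with
    | nil => simp at hh
    | cons y t => exact ⟨t, by simpa using (by simpa using hh : y = v) ▸ rfl⟩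
  have hlt : (v :: t).Chain' (· < ·) := hc.imp fun _ _ h => h.lt
  have hp := (List.isChain_iff_pairwise).mp hlt
  intro x hx
  rcases hx with _ | hx
  · rfl
  · exact (List.rel_of_pairwise_cons hp (by assumption)).le

omit [PartialOrder γ] in
lemma getLast?_cons_ne_nil {x : γ} {l : List γ} (h : l ≠ []) :
    (x :: l).getLast? = l.getLast? := by
  cases l with
  | nil => exact absurd rfl h
  | cons b t => exact List.getLast?_cons_cons ..

omit [PartialOrder γ] in
lemma card_split (p q : γ → Prop) [Finite {x // p x}] :
    Nat.card {x // p x} = Nat.card {x // p x ∧ q x} + Nat.card {x // p x ∧ ¬ q x} := by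
  rw [← Nat.card_congr (Equiv.subtypeSubtypeEquivSubtypeInter p q),
    ← Nat.card_congr (Equiv.subtypeSubtypeEquivSubtypeInter p (fun x => ¬ q x)),
    ← Nat.card_sum]
  exact (Nat.card_congr (Equiv.sumCompl (fun x : {x // p x} => q x.1))).symm
end GapHelpers

section Transfer
variable {α : Type*} [PartialOrder α] {a : α}

lemma covBy_subtype_iff (hmin : IsMin a) (x y : {x : α // x ≠ a}) :
    x ⋖ y ↔ (x:α) ⋖ (y:α) := by
  constructor
  · rintro ⟨hlt, hno⟩
    refine ⟨Subtype.coe_lt_coe.2 hlt, fun z hxz hzy => ?_⟩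
    have hz : z ≠ a := by rintro rfl; exact hmin.not_lt hxz
    exact hno (c := ⟨z, hz⟩) (Subtype.coe_lt_coe.1 hxz) (Subtype.coe_lt_coe.1 hzy)
  · rintro ⟨hlt, hno⟩
    exact ⟨Subtype.coe_lt_coe.1 hlt, fun z hxz hzy =>
      hno (Subtype.coe_lt_coe.2 hxz) (Subtype.coe_lt_coe.2 hzy)⟩

lemma isMax_subtype_iff (hmin : IsMin a) (x : {x : α // x ≠ a}) :
    IsMax x ↔ IsMax (x:α) := by
  constructor
  · intro hx y hxy
    have hy : y ≠ a := by
      rintro rfl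
      exact x.2 (le_antisymm hxy (hmin hxy))
    exact hx (b := ⟨y, hy⟩) hxy
  · intro hx y hxy
    exact Subtype.coe_le_coe.1 (hx (Subtype.coe_le_coe.2 hxy))

lemma isMin_coe_subtype {x : {x : α // x ≠ a}} (hx : IsMin (x:α)) : IsMin x :=
  fun _ hxy => Subtype.coe_le_coe.1 (hx (Subtype.coe_le_coe.2 hxy))

lemma isMin_subtype_cases [Finite α] (hmin : IsMin a) (x : {x : α // x ≠ a})
    (hx : IsMin x) (hnx : ¬ IsMin (x:α)) :
    a ⋖ (x:α) ∧ ∀ c, c ⋖ (x:α) → c = a := by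
  have key : ∀ z : α, z < (x:α) → z = a := by
    intro z hz
    by_contra hz'
    exact hnx.elim (fun _ => (hx (b := ⟨z, hz'⟩) (Subtype.coe_le_coe.1 hz.le)).not_gt
      (Subtype.coe_lt_coe.1 hz) |>.elim)
  have hax : a < (x:α) := by
    rcases not_isMin_iff.1 hnx with ⟨z, hz⟩
    exact key z hz ▸ hz
  refine ⟨⟨hax, fun z haz hzx => ?_⟩, fun c hc => key c hc.lt⟩
  exact haz.ne' (key z hzx)

lemma isMin_subtype_of_B1 [Finite α] (hmin : IsMin a) (x : {x : α // x ≠ a})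
    (hall : ∀ c, c ⋖ (x:α) → c = a) : IsMin x := by
  intro y hy
  rcases eq_or_lt_of_le hy with h | h
  · exact h.ge
  exfalso
  have hlt : (y:α) < x := Subtype.coe_lt_coe.2 h
  obtain ⟨c, hyc, hcx⟩ := hlt.exists_le_covby
  have := hall c hcx
  subst this
  exact y.2 (le_antisymm hyc (hmin hyc))

lemma chain'_map_coe (hmin : IsMin a) (l : List {x : α // x ≠ a}) :
    (l.map Subtype.val).Chain' (· ⋖ ·) ↔ l.Chain' (· ⋖ ·) := by
  refine Iff.trans (List.isChain_map Subtype.val) ?_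
  constructor
  · exact fun h => h.imp fun x y hxy => (covBy_subtype_iff hmin x y).2 hxy
  · exact fun h => h.imp fun x y hxy => (covBy_subtype_iff hmin x y).1 hxy

lemma head?_coe_iff (l : List {x : α // x ≠ a}) (v : {x : α // x ≠ a}) :
    (l.map Subtype.val).head? = some (v:α) ↔ l.head? = some v := by
  rw [List.head?_map]
  cases l.head? with
  | none => simp
  | some w => simp [Subtype.ext_iff]

lemma getLast?_coe_iff (l : List {x : α // x ≠ a}) (v : {x : α // x ≠ a}) :
    (l.map Subtype.val).getLast? = some (v:α) ↔ l.getLast? = some v := by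
  rw [List.getLast?_map]
  cases l.getLast? with
  | none => simp
  | some w => simp [Subtype.ext_iff]

lemma lastMax_coe_iff (hmin : IsMin a) (l : List {x : α // x ≠ a}) :
    (∃ m, (l.map Subtype.val).getLast? = some m ∧ IsMax m) ↔
      ∃ m, l.getLast? = some m ∧ IsMax m := by
  constructor
  · rintro ⟨m, hm, hmax⟩
    rw [List.getLast?_map] at hm
    cases hl : l.getLast? with
    | none => rw [hl] at hm; simp at hm
    | some w =>
      rw [hl] at hm
      simp only [Option.map_some] at hm
      refine ⟨w, rfl, (isMax_subtype_iff hmin w).2 ?_⟩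
      exact Option.some.inj hm ▸ hmax
  · rintro ⟨m, hm, hmax⟩
    exact ⟨(m:α), (getLast?_coe_iff l m).2 hm, (isMax_subtype_iff hmin m).1 hmax⟩

lemma map_val_pmap (l : List α) (h : ∀ x ∈ l, x ≠ a) :
    (l.pmap (fun x hx => (⟨x, hx⟩ : {x : α // x ≠ a})) h).map Subtype.val = l := by
  simp [List.map_pmap]

lemma mem_ne_of_upchain {β : α} (hβ : a < β) {l : List α} (hl : UpChain β l) :
    ∀ x ∈ l, x ≠ a := by
  intro x hx hxa
  exact hβ.not_ge (hxa ▸ chain_head_le hl.1 hl.2.1 x hx)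

lemma mem_ne_of_maxchain (hmin : IsMin a) {l : List α} (hl : IsMaxChainList l)
    (hh : l.head? ≠ some a) : ∀ x ∈ l, x ≠ a := by
  obtain ⟨m, hm, _⟩ := hl.2.1
  intro x hx hxa
  have hma : m ≤ a := hxa ▸ chain_head_le hl.1 hm x hx
  have : m = a := le_antisymm hma (hmin hma)
  exact hh (this ▸ hm)
end Transfer
section Counts
variable {α : Type*} [Fintype α] [PartialOrder α] {a : α}

lemma count_card (a : α) : Nat.card α = Nat.card {x : α // x ≠ a} + 1 := by
  rw [← Nat.card_congr (Equiv.sumCompl (fun x : α => x = a)), Nat.card_sum,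
    Nat.card_eq_fintype_card (α := {x : α // x = a}), Fintype.card_subtype_eq]
  have : Nat.card {x : α // ¬ x = a} = Nat.card {x : α // x ≠ a} := rfl
  omega

lemma count_max (hmin : IsMin a) (hmax : ¬ IsMax a) :
    numMax α = numMax {x : α // x ≠ a} := by
  apply Nat.card_congr
  exact ⟨fun v => ⟨⟨v.1, fun h => hmax (h ▸ v.2)⟩, (isMax_subtype_iff hmin _).mpr v.2⟩,
    fun w => ⟨w.1.1, (isMax_subtype_iff hmin w.1).mp w.2⟩,
    fun v => rfl, fun w => rfl⟩

lemma count_min (hmin : IsMin a) :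
    numMin α + Nat.card {b : α // a ⋖ b ∧ ∀ c, c ⋖ b → c = a}
      = numMin {x : α // x ≠ a} + 1 := by
  have h1 : numMin α = Nat.card {v : α // IsMin v ∧ v = a}
      + Nat.card {v : α // IsMin v ∧ ¬ v = a} := card_split _ _
  have h2 : Nat.card {v : α // IsMin v ∧ v = a} = 1 := by
    have e0 : {v : α // IsMin v ∧ v = a} ≃ {v : α // v = a} :=
      Equiv.subtypeEquivRight fun v => ⟨And.right, fun h => ⟨h ▸ hmin, h⟩⟩
    rw [Nat.card_congr e0, Nat.card_eq_fintype_card, Fintype.card_subtype_eq]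
  have h3 : numMin {x : α // x ≠ a} =
      Nat.card {v : {x : α // x ≠ a} // IsMin v ∧ IsMin (v:α)}
      + Nat.card {v : {x : α // x ≠ a} // IsMin v ∧ ¬ IsMin (v:α)} := card_split _ _
  have e1 : {v : {x : α // x ≠ a} // IsMin v ∧ IsMin (v:α)} ≃ {v : α // IsMin v ∧ ¬ v = a} :=
    ⟨fun v => ⟨v.1.1, v.2.2, v.1.2⟩,
     fun w => ⟨⟨w.1, w.2.2⟩, isMin_coe_subtype w.2.1, w.2.1⟩,
     fun v => rfl, fun w => rfl⟩
  have e2 : {v : {x : α // x ≠ a} // IsMin v ∧ ¬ IsMin (v:α)} ≃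
      {b : α // a ⋖ b ∧ ∀ c, c ⋖ b → c = a} :=
    ⟨fun v => ⟨v.1.1, isMin_subtype_cases hmin v.1 v.2.1 v.2.2⟩,
     fun b => ⟨⟨b.1, b.2.1.lt.ne'⟩, isMin_subtype_of_B1 hmin _ b.2.2,
       fun hm => hm.not_lt b.2.1.lt⟩,
     fun v => rfl, fun b => rfl⟩
  rw [h1, h2, h3, Nat.card_congr e1, Nat.card_congr e2]
  omega

lemma count_edges (hmin : IsMin a) :
    numEdges α = numEdges {x : α // x ≠ a} + Nat.card {b : α // a ⋖ b} := by
  have h1 : numEdges α = Nat.card {p : α × α // p.1 ⋖ p.2 ∧ p.1 = a}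
      + Nat.card {p : α × α // p.1 ⋖ p.2 ∧ ¬ p.1 = a} := card_split _ _
  have e1 : {p : α × α // p.1 ⋖ p.2 ∧ p.1 = a} ≃ {b : α // a ⋖ b} :=
    ⟨fun p => ⟨p.1.2, by obtain ⟨⟨x, y⟩, hc, rfl⟩ := p; exact hc⟩,
     fun b => ⟨(a, b.1), b.2, rfl⟩,
     by rintro ⟨⟨x, y⟩, hc, rfl⟩; rfl, fun b => rfl⟩
  have e2 : {p : α × α // p.1 ⋖ p.2 ∧ ¬ p.1 = a} ≃
      {p : {x : α // x ≠ a} × {x : α // x ≠ a} // p.1 ⋖ p.2} :=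
    ⟨fun p => ⟨(⟨p.1.1, p.2.2⟩, ⟨p.1.2, fun h => hmin.not_lt (h ▸ p.2.1.lt)⟩),
        (covBy_subtype_iff hmin _ _).2 p.2.1⟩,
     fun q => ⟨(q.1.1.1, q.1.2.1), (covBy_subtype_iff hmin _ _).1 q.2, q.1.1.2⟩,
     by rintro ⟨⟨x, y⟩, h⟩; rfl, by rintro ⟨⟨⟨x, hx⟩, ⟨y, hy⟩⟩, h⟩; rfl⟩
  rw [h1, Nat.card_congr e1, Nat.card_congr e2]
  unfold numEdges
  omega

lemma count_B :
    Nat.card {b : α // a ⋖ b} = Nat.card {b : α // a ⋖ b ∧ ∀ c, c ⋖ b → c = a}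
      + Nat.card {b : α // a ⋖ b ∧ ∃ c, c ≠ a ∧ c ⋖ b} := by
  have h1 : Nat.card {b : α // a ⋖ b} = Nat.card {b : α // a ⋖ b ∧ ∀ c, c ⋖ b → c = a}
      + Nat.card {b : α // a ⋖ b ∧ ¬ ∀ c, c ⋖ b → c = a} := card_split _ _
  rw [h1]
  congr 1
  apply Nat.card_congr
  apply Equiv.subtypeEquivRight
  intro b
  constructor
  · rintro ⟨hab, hn⟩
    push_neg at hn
    obtain ⟨c, hc, hca⟩ := hn
    exact ⟨hab, c, hca, hc⟩
  · rintro ⟨hab, c, hca, hc⟩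
    exact ⟨hab, fun hall => hca (hall c hc)⟩
end Counts
section Chains
variable {α : Type*} [Fintype α] [PartialOrder α] {a : α}

lemma count_upchain (hmin : IsMin a) (β : {x : α // x ≠ a}) (hβ : a < (β:α)) :
    uc (β:α) = Nat.card {l : List {x : α // x ≠ a} // UpChain β l} := by
  apply Nat.card_congr
  refine (Equiv.ofBijective
    (fun l : {l : List {x : α // x ≠ a} // UpChain β l} =>
      (⟨l.1.map Subtype.val, (chain'_map_coe hmin _).2 l.2.1,
        (head?_coe_iff _ _).2 l.2.2.1,
        (lastMax_coe_iff hmin _).2 l.2.2.2⟩ : {l : List α // UpChain (β:α) l}))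
    ⟨?_, ?_⟩).symm
  · intro l1 l2 hl
    exact Subtype.ext (List.map_injective_iff.2 Subtype.val_injective
      (congrArg Subtype.val hl))
  · rintro ⟨l, hl⟩
    have hne := mem_ne_of_upchain hβ hl
    refine ⟨⟨l.pmap (fun x hx => ⟨x, hx⟩) hne, ?_, ?_, ?_⟩,
      Subtype.ext (map_val_pmap l hne)⟩
    · exact (chain'_map_coe hmin _).1 ((map_val_pmap l hne).symm ▸ hl.1)
    · exact (head?_coe_iff _ β).1 (by rw [map_val_pmap l hne]; exact hl.2.1)
    · exact (lastMax_coe_iff hmin _).1 (by rw [map_val_pmap l hne]; exact hl.2.2)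

lemma count_offa (hmin : IsMin a) :
    Nat.card {l : List α // IsMaxChainList l ∧ l.head? ≠ some a} =
      Nat.card {l : List {x : α // x ≠ a} //
        IsMaxChainList l ∧ ∃ m, l.head? = some m ∧ IsMin (m:α)} := by
  apply Nat.card_congr
  refine (Equiv.ofBijective
    (fun l : {l : List {x : α // x ≠ a} //
        IsMaxChainList l ∧ ∃ m, l.head? = some m ∧ IsMin (m:α)} => ?_) ⟨?_, ?_⟩).symm
  · refine ⟨l.1.map Subtype.val, ?_⟩
    obtain ⟨m, hm, hIm⟩ := l.2.2
    refine ⟨⟨(chain'_map_coe hmin _).2 l.2.1.1,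
      ⟨(m:α), (head?_coe_iff _ _).2 hm, hIm⟩,
      (lastMax_coe_iff hmin _).2 l.2.1.2.2⟩, ?_⟩
    rw [(head?_coe_iff _ _).2 hm]
    exact fun hcontra => m.2 (Option.some.inj hcontra)
  · intro l1 l2 hl
    exact Subtype.ext (List.map_injective_iff.2 Subtype.val_injective
      (congrArg Subtype.val hl))
  · rintro ⟨l, hl, hh⟩
    have hne := mem_ne_of_maxchain hmin hl hh
    obtain ⟨m, hm, hIm⟩ := hl.2.1
    have hma : m ≠ a := fun hcon => hh (hcon ▸ hm)
    refine ⟨⟨l.pmap (fun x hx => ⟨x, hx⟩) hne,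
      ⟨(chain'_map_coe hmin _).1 ((map_val_pmap l hne).symm ▸ hl.1),
       ⟨⟨m, hma⟩, (head?_coe_iff _ ⟨m, hma⟩).1 (by rw [map_val_pmap l hne]; exact hm),
        isMin_coe_subtype hIm⟩,
       (lastMax_coe_iff hmin _).1 (by rw [map_val_pmap l hne]; exact hl.2.2)⟩,
      ⟨m, hma⟩, (head?_coe_iff _ ⟨m, hma⟩).1 (by rw [map_val_pmap l hne]; exact hm), hIm⟩,
      Subtype.ext (map_val_pmap l hne)⟩

lemma count_heada (hmin : IsMin a) (hmax : ¬ IsMax a) :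
    Nat.card {l : List α // IsMaxChainList l ∧ l.head? = some a}
      = ∑ β : {b : α // a ⋖ b}, uc (β:α) := by
  classical
  haveI : ∀ β : {b : α // a ⋖ b}, Finite {l : List α // UpChain (β:α) l} :=
    fun β => finite_pred_chain _ (fun l hl => hl.1)
  haveI : ∀ β : {b : α // a ⋖ b}, Fintype {l : List α // UpChain (β:α) l} :=
    fun β => Fintype.ofFinite _
  haveI : Finite {l : List α // IsMaxChainList l ∧ l.head? = some a} :=
    finite_pred_chain _ (fun l hl => hl.1.1)
  have e : (Σ β : {b : α // a ⋖ b}, {l : List α // UpChain (β:α) l}) ≃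
      {l : List α // IsMaxChainList l ∧ l.head? = some a} := by
    refine Equiv.ofBijective (fun x => ⟨a :: x.2.1, ⟨?_, ⟨a, rfl, hmin⟩, ?_⟩, rfl⟩) ⟨?_, ?_⟩
    · refine List.isChain_cons.2 ⟨fun y hy => ?_, x.2.2.1⟩
      rw [x.2.2.2.1] at hy
      have hy' := Option.mem_some_iff.1 hy
      subst hy'
      exact x.1.2
    · have hnil : x.2.1 ≠ [] := by
        intro hcon
        have := x.2.2.2.1
        rw [hcon] at this
        simp at this
      rw [getLast?_cons_ne_nil hnil]
      exact x.2.2.2.2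
    · rintro ⟨β₁, l₁⟩ ⟨β₂, l₂⟩ hG
      have hval : a :: l₁.1 = a :: l₂.1 := congrArg Subtype.val hG
      have hl : l₁.1 = l₂.1 := by injection hval
      have hβ : β₁ = β₂ := by
        apply Subtype.ext
        have h1 := l₁.2.2.1
        have h2 := l₂.2.2.1
        rw [hl] at h1
        rw [h1] at h2
        exact Option.some.inj h2
      subst hβ
      exact congrArg (Sigma.mk β₁) (Subtype.ext hl)
    · rintro ⟨l, hl, hh⟩
      cases l with
      | nil => simp at hh
      | cons x t =>
        have hx : x = a := by simpa using hh
        subst hx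
        cases t with
        | nil =>
          obtain ⟨m, hm, hM⟩ := hl.2.2
          simp at hm
          exact absurd (hm ▸ hM) hmax
        | cons b t' =>
          obtain ⟨hab, hchain⟩ := List.isChain_cons_cons.1 hl.1
          refine ⟨⟨⟨b, hab⟩, ⟨b :: t', hchain, rfl, ?_⟩⟩, rfl⟩
          have := hl.2.2
          rwa [getLast?_cons_ne_nil (List.cons_ne_nil b t')] at this
  rw [← Nat.card_congr e, Nat.card_eq_fintype_card, Fintype.card_sigma]
  apply Finset.sum_congr rfl
  intro β _
  rw [uc, Nat.card_eq_fintype_card]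

lemma count_chains_sub (hmin : IsMin a) :
    numMaxChains {x : α // x ≠ a} =
      Nat.card {l : List {x : α // x ≠ a} //
        IsMaxChainList l ∧ ∃ m, l.head? = some m ∧ IsMin (m:α)}
      + ∑ β : {β : {x : α // x ≠ a} // IsMin β ∧ ¬ IsMin (β:α)},
          Nat.card {l : List {x : α // x ≠ a} // UpChain (β:{x : α // x ≠ a}) l} := by
  classical
  haveI : Finite {l : List {x : α // x ≠ a} // IsMaxChainList l} :=
    finite_pred_chain _ (fun l hl => hl.1)
  haveI : ∀ β : {β : {x : α // x ≠ a} // IsMin β ∧ ¬ IsMin (β:α)},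
      Finite {l : List {x : α // x ≠ a} // UpChain β.1 l} :=
    fun β => finite_pred_chain _ (fun l hl => hl.1)
  haveI : ∀ β : {β : {x : α // x ≠ a} // IsMin β ∧ ¬ IsMin (β:α)},
      Fintype {l : List {x : α // x ≠ a} // UpChain β.1 l} :=
    fun β => Fintype.ofFinite _
  have hsplit : numMaxChains {x : α // x ≠ a} =
      Nat.card {l : List {x : α // x ≠ a} //
        IsMaxChainList l ∧ ∃ m, l.head? = some m ∧ IsMin (m:α)}
      + Nat.card {l : List {x : α // x ≠ a} //
        IsMaxChainList l ∧ ¬ ∃ m, l.head? = some m ∧ IsMin (m:α)} :=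
    card_split _ _
  rw [hsplit]
  congr 1
  have e : (Σ β : {β : {x : α // x ≠ a} // IsMin β ∧ ¬ IsMin (β:α)},
      {l : List {x : α // x ≠ a} // UpChain (β:{x : α // x ≠ a}) l}) ≃
      {l : List {x : α // x ≠ a} //
        IsMaxChainList l ∧ ¬ ∃ m, l.head? = some m ∧ IsMin (m:α)} := by
    refine Equiv.ofBijective (fun x => ⟨x.2.1,
      ⟨x.2.2.1, ⟨x.1.1, x.2.2.2.1, x.1.2.1⟩, x.2.2.2.2⟩, ?_⟩) ⟨?_, ?_⟩
    · rintro ⟨m, hm, hIm⟩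
      rw [x.2.2.2.1] at hm
      exact x.1.2.2 (Option.some.inj hm ▸ hIm)
    · rintro ⟨β₁, l₁⟩ ⟨β₂, l₂⟩ hG
      have hl : l₁.1 = l₂.1 := congrArg Subtype.val hG
      have hβ : β₁ = β₂ := by
        apply Subtype.ext
        have h1 := l₁.2.2.1
        have h2 := l₂.2.2.1
        rw [hl] at h1
        rw [h1] at h2
        exact Option.some.inj h2
      subst hβ
      exact congrArg (Sigma.mk β₁) (Subtype.ext hl)
    · rintro ⟨l, hl, hr⟩
      obtain ⟨m, hm, hMin⟩ := hl.2.1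
      have hnm : ¬ IsMin (m:α) := fun hI => hr ⟨m, hm, hI⟩
      exact ⟨⟨⟨m, hMin, hnm⟩, ⟨l, hl.1, hm, hl.2.2⟩⟩, rfl⟩
  rw [← Nat.card_congr e, Nat.card_eq_fintype_card, Fintype.card_sigma]
  apply Finset.sum_congr rfl
  intro β _
  rw [Nat.card_eq_fintype_card]
end Chains
section Final
variable {α : Type*} [Fintype α] [PartialOrder α] {a : α}

noncomputable def eBone (hmin : IsMin a) :
    {v : {x : α // x ≠ a} // IsMin v ∧ ¬ IsMin (v:α)} ≃
      {b : α // a ⋖ b ∧ ∀ c, c ⋖ b → c = a} :=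
  ⟨fun v => ⟨v.1.1, isMin_subtype_cases hmin v.1 v.2.1 v.2.2⟩,
   fun b => ⟨⟨b.1, b.2.1.lt.ne'⟩, isMin_subtype_of_B1 hmin _ b.2.2,
     fun hm => hm.not_lt b.2.1.lt⟩,
   fun v => rfl, fun b => rfl⟩

def eInter : {b : {b : α // a ⋖ b} // ∀ c, c ⋖ b.1 → c = a} ≃
    {b : α // a ⋖ b ∧ ∀ c, c ⋖ b → c = a} :=
  ⟨fun x => ⟨x.1.1, x.1.2, x.2⟩, fun b => ⟨⟨b.1, b.2.1⟩, b.2.2⟩,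
    fun x => rfl, fun b => rfl⟩

lemma sum_uc (hmin : IsMin a)
    (h : ∀ b : α, a ⋖ b → (∃ c, c ≠ a ∧ c ⋖ b) → uc b = 1) :
    (∑ β : {b : α // a ⋖ b}, uc (β:α)) =
      (∑ β : {β : {x : α // x ≠ a} // IsMin β ∧ ¬ IsMin (β:α)},
        Nat.card {l : List {x : α // x ≠ a} // UpChain (β:{x : α // x ≠ a}) l})
      + Nat.card {b : α // a ⋖ b ∧ ∃ c, c ≠ a ∧ c ⋖ b} := by
  classical
  have hT : (∑ β : {β : {x : α // x ≠ a} // IsMin β ∧ ¬ IsMin (β:α)},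
        Nat.card {l : List {x : α // x ≠ a} // UpChain (β:{x : α // x ≠ a}) l})
      = ∑ b : {b : α // a ⋖ b ∧ ∀ c, c ⋖ b → c = a}, uc b.1 := by
    rw [← Equiv.sum_comp (eBone hmin).symm
      (fun β : {β : {x : α // x ≠ a} // IsMin β ∧ ¬ IsMin (β:α)} =>
      Nat.card {l : List {x : α // x ≠ a} // UpChain (β:{x : α // x ≠ a}) l})]
    apply Finset.sum_congr rfl
    intro b _
    simp only [eBone, Equiv.coe_fn_symm_mk]
    exact (count_upchain hmin ⟨b.1, b.2.1.lt.ne'⟩ b.2.1.lt).symm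
  rw [hT]
  rw [← Equiv.sum_comp (Equiv.sumCompl (fun b : {b : α // a ⋖ b} => ∀ c, c ⋖ b.1 → c = a))
    (fun β : {b : α // a ⋖ b} => uc (β:α)), Fintype.sum_sum_type]
  congr 1
  · rw [← Equiv.sum_comp (eInter (a := a))
      (fun b : {b : α // a ⋖ b ∧ ∀ c, c ⋖ b → c = a} => uc b.1)]
    apply Finset.sum_congr rfl
    intro x _
    simp only [eInter, Equiv.coe_fn_mk, Equiv.sumCompl_apply_inl]
  · have hone : ∀ b : {b : {b : α // a ⋖ b} // ¬ ∀ c, c ⋖ b.1 → c = a}, uc b.1.1 = 1 := by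
      intro b
      have hb := b.2
      push_neg at hb
      obtain ⟨c, hc, hca⟩ := hb
      exact h b.1.1 b.1.2 ⟨c, hca, hc⟩
    calc (∑ b : {b : {b : α // a ⋖ b} // ¬ ∀ c, c ⋖ b.1 → c = a},
          uc ((Equiv.sumCompl (fun b : {b : α // a ⋖ b} => ∀ c, c ⋖ b.1 → c = a))
            (Sum.inr b) : α))
        = ∑ _b : {b : {b : α // a ⋖ b} // ¬ ∀ c, c ⋖ b.1 → c = a}, 1 :=
          Finset.sum_congr rfl (fun b _ => by
            rw [Equiv.sumCompl_apply_inr]; exact hone b)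
      _ = Fintype.card {b : {b : α // a ⋖ b} // ¬ ∀ c, c ⋖ b.1 → c = a} := by
          simp [Finset.card_univ]
      _ = Nat.card {b : α // a ⋖ b ∧ ∃ c, c ≠ a ∧ c ⋖ b} := by
          rw [← Nat.card_eq_fintype_card]
          apply Nat.card_congr
          refine (Equiv.subtypeSubtypeEquivSubtypeInter
            (fun b : α => a ⋖ b) (fun b => ¬ ∀ c, c ⋖ b → c = a)).trans
            (Equiv.subtypeEquivRight fun b => ?_)
          constructor
          · rintro ⟨hab, hn⟩
            push_neg at hn
            obtain ⟨c, hc, hca⟩ := hn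
            exact ⟨hab, c, hca, hc⟩
          · rintro ⟨hab, c, hca, hc⟩
            exact ⟨hab, fun hall => hca (hall c hc)⟩
end Final

theorem gap_deletion_eq (α : Type*) [Fintype α] [PartialOrder α] (a : α)
    (hmin : IsMin a) (hmax : ¬ IsMax a)
    (h : ∀ b : α, a ⋖ b → (∃ c, c ≠ a ∧ c ⋖ b) → uc b = 1) :
    gap α = gap {x : α // x ≠ a} := by
  classical
  haveI : Finite {l : List α // IsMaxChainList l} :=
    finite_pred_chain _ (fun l hl => hl.1)
  have hX : numMaxChains α
      = Nat.card {l : List α // IsMaxChainList l ∧ l.head? = some a}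
      + Nat.card {l : List α // IsMaxChainList l ∧ l.head? ≠ some a} :=
    card_split (fun l : List α => IsMaxChainList l) (fun l => l.head? = some a)
  have h1 := count_heada hmin hmax
  have h2 := count_offa hmin
  have h3 := count_chains_sub (a := a) hmin
  have h4 := sum_uc hmin h
  have hchains : numMaxChains α = numMaxChains {x : α // x ≠ a}
      + Nat.card {b : α // a ⋖ b ∧ ∃ c, c ≠ a ∧ c ⋖ b} := by
    omega
  have hcard := count_card a
  have hmx := count_max hmin hmax
  have hmn := count_min hmin
  have hed := count_edges hmin
  have hB := count_B (a := a)
  unfold gap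
  omega
end
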